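/- For distinct nonzero $\lambda_1, \lambda_2, \alpha_1, \alpha_2 \in \mathbb{C}^*$ and $\beta_1, \beta_2, \gamma_1, \gamma_2, \rho_1, \rho_2 \in \mathbb{C}$: the modules $\Omega(\lambda_1, \alpha_1, \beta_1, \rho_1)$ and $\Omega(\lambda_2, \alpha_2, \beta_2, \rho_2)$ over the affine-Virasoro algebra of type $A_1$ are isomorphic if and only if $(\lambda_1,\alpha_1,\rho_1) = (\lambda_2,\alpha_2,\rho_2)$ and ($\beta_1 = \beta_2$ or $\beta_1 = -\beta_2 - 1$). -/

import Mathlib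

open MvPolynomial

/-- `ℂ[s,t]`, with `s = X 0` and `t = X 1`. -/
noncomputable abbrev P2 : Type := MvPolynomial (Fin 2) ℂ

/-- Substitution `g(s,t) ↦ g(s - i, t + a)`. -/
noncomputable def subST (i : ℤ) (a : ℂ) : P2 →ₐ[ℂ] P2 :=
  aeval ![X 0 - C (i : ℂ), X 1 + C a]

/-- Action of `e_i` on `Ω(λ,α,β,ρ)`. -/
noncomputable def omE (lam alp : ℂ) (i : ℤ) (g : P2) : P2 :=
  (lam ^ i * alp) • subST i (-2) g

/-- Action of `f_i` on `Ω(λ,α,β,ρ)`. -/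
noncomputable def omF (lam alp bet : ℂ) (i : ℤ) (g : P2) : P2 :=
  (-(lam ^ i / alp)) • ((C (1/2 : ℂ) * X 1 - C bet) * (C (1/2 : ℂ) * X 1 + C bet + 1) *
    subST i 2 g)

/-- Action of `h_i` on `Ω(λ,α,β,ρ)`. -/
noncomputable def omH (lam : ℂ) (i : ℤ) (g : P2) : P2 :=
  lam ^ i • (X 1 * subST i 0 g)

/-- Action of `d_i` on `Ω(λ,α,β,ρ)`. -/
noncomputable def omD (lam rho : ℂ) (i : ℤ) (g : P2) : P2 :=
  lam ^ i • ((X 0 + C ((i : ℂ) * rho)) * subST i 0 g)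

lemma subST_zero_zero (g : P2) : subST 0 0 g = g := by
  have h : (![X 0 - C ((0:ℤ) : ℂ), X 1 + C (0:ℂ)] : Fin 2 → P2) = X := by
    funext i
    fin_cases i <;> simp
  rw [subST, h, aeval_X_left_apply]

lemma subST_C (i : ℤ) (a : ℂ) (x : ℂ) : subST i a (C x) = C x := by
  simp [subST, algebraMap_eq]

lemma unit_eq_C (u : P2) (hu : IsUnit u) : ∃ c : ℂ, u = C c := by
  have h1 : IsUnit ((finSuccEquiv ℂ 1) u) := hu.map (finSuccEquiv ℂ 1).toAlgHom
  obtain ⟨r, hr, hru⟩ := Polynomial.isUnit_iff.mp h1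
  have h2 : IsUnit ((finSuccEquiv ℂ 0) r) := hr.map (finSuccEquiv ℂ 0).toAlgHom
  obtain ⟨r2, -, hr2u⟩ := Polynomial.isUnit_iff.mp h2
  obtain ⟨c, rfl⟩ := C_surjective (Fin 0) r2
  refine ⟨c, ?_⟩
  have hr' : r = C c := by
    apply (finSuccEquiv ℂ 0).injective
    rw [← hr2u]
    simp [finSuccEquiv_apply]
  apply (finSuccEquiv ℂ 1).injective
  rw [← hru, hr']
  simp [finSuccEquiv_apply]

/-- `Ω(λ₁,α₁,β₁,ρ₁) ≅ Ω(λ₂,α₂,β₂,ρ₂)` as modules over the affine-Virasoro algebra of type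
`A₁` if and only if `(λ₁,α₁,ρ₁) = (λ₂,α₂,ρ₂)` and (`β₁ = β₂` or `β₁ = -β₂ - 1`). -/
theorem stmt18 (lam1 lam2 alp1 alp2 : ℂ)
    (hl1 : lam1 ≠ 0) (hl2 : lam2 ≠ 0) (ha1 : alp1 ≠ 0) (ha2 : alp2 ≠ 0)
    (bet1 bet2 rho1 rho2 : ℂ) :
    (∃ φ : P2 ≃ₗ[ℂ] P2, ∀ (i : ℤ) (g : P2),
        φ (omE lam1 alp1 i g) = omE lam2 alp2 i (φ g) ∧
        φ (omF lam1 alp1 bet1 i g) = omF lam2 alp2 bet2 i (φ g) ∧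
        φ (omH lam1 i g) = omH lam2 i (φ g) ∧
        φ (omD lam1 rho1 i g) = omD lam2 rho2 i (φ g)) ↔
      (lam1 = lam2 ∧ alp1 = alp2 ∧ rho1 = rho2 ∧ (bet1 = bet2 ∨ bet1 = -bet2 - 1)) := by
  constructor
  · rintro ⟨φ, hφ⟩
    have hH : ∀ g : P2, φ (X 1 * g) = X 1 * φ g := by
      intro g
      have h := (hφ 0 g).2.2.1
      simpa [omH, subST_zero_zero] using h
    have hD : ∀ g : P2, φ (X 0 * g) = X 0 * φ g := by
      intro g
      have h := (hφ 0 g).2.2.2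
      simpa [omD, subST_zero_zero] using h
    have hX : ∀ (n : Fin 2) (g : P2), φ (X n * g) = X n * φ g := by
      intro n g
      fin_cases n
      · exact hD g
      · exact hH g
    have hmul : ∀ p g : P2, φ (p * g) = p * φ g := by
      intro p
      induction p using MvPolynomial.induction_on with
      | C a =>
        intro g
        rw [C_mul', map_smul, C_mul']
      | add p q hp hq =>
        intro g
        rw [add_mul, map_add, hp, hq, add_mul]
      | mul_X p n hp =>
        intro g
        have h1 : p * X n * g = X n * (p * g) := by ring
        rw [h1, hX, hp]
        ring
    have hrep : ∀ g : P2, φ g = g * φ 1 := by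
      intro g
      calc φ g = φ (g * 1) := by rw [mul_one]
        _ = g * φ 1 := hmul g 1
    obtain ⟨g₀, hg₀⟩ := φ.surjective 1
    have hone : g₀ * φ 1 = 1 := by rw [← hmul g₀ 1, mul_one, hg₀]
    have hunit : IsUnit (φ 1) := IsUnit.of_mul_eq_one g₀ ((mul_comm _ _).trans hone)
    obtain ⟨c, hc⟩ := unit_eq_C _ hunit
    have hcne : c ≠ 0 := by
      rintro rfl
      have h0 : (1 : P2) = 0 := by rw [← hone, hc]; simp
      exact one_ne_zero h0
    have hrep' : ∀ g : P2, φ g = g * C c := fun g => by rw [hrep, hc]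
    have hDeq : ∀ x : Fin 2 → ℂ, lam1 * ((x 0 + rho1) * c) = lam2 * ((x 0 + rho2) * c) := by
      intro x
      have h := (hφ 1 1).2.2.2
      rw [hrep' (omD lam1 rho1 1 1), hrep' 1, one_mul] at h
      have h2 := congrArg (eval x) h
      simp only [omD, subST_C, map_one, mul_one, zpow_one, Int.cast_one, one_mul,
        smul_eq_C_mul, eval_mul, eval_add, eval_C, eval_X] at h2
      linear_combination h2
    have hlamc : lam1 * c = lam2 * c := by
      linear_combination hDeq (fun _ => 1) - hDeq (fun _ => 0)
    have hlam : lam1 = lam2 := mul_right_cancel₀ hcne hlamc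
    have hrho : rho1 = rho2 := by
      have h : rho1 * (lam1 * c) = rho2 * (lam1 * c) := by
        linear_combination hDeq (fun _ => 0) - rho2 * hlamc
      exact mul_right_cancel₀ (mul_ne_zero hl1 hcne) h
    have halp : alp1 = alp2 := by
      have h := (hφ 0 1).1
      rw [hrep' (omE lam1 alp1 0 1), hrep' 1, one_mul] at h
      have h2 := congrArg (eval (fun _ => 0)) h
      simp only [omE, zpow_zero, one_mul, map_one, mul_one, subST_C, smul_eq_C_mul,
        eval_mul, eval_C] at h2
      exact mul_right_cancel₀ hcne (by linear_combination h2)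
    have hbet : bet1 = bet2 ∨ bet1 = -bet2 - 1 := by
      have h := (hφ 0 1).2.1
      rw [hrep' (omF lam1 alp1 bet1 0 1), hrep' 1, one_mul, halp] at h
      have h2 := congrArg (eval (fun _ => 2 * bet2)) h
      simp only [omF, zpow_zero, one_mul, map_one, mul_one, subST_C, smul_eq_C_mul,
        eval_mul, eval_add, eval_sub, eval_C, eval_X, eval_neg] at h2
      have hkey : (bet2 - bet1) * ((bet2 + bet1 + 1) * c) = 0 := by
        field_simp at h2
        linear_combination (-c) * h2
      rcases mul_eq_zero.mp hkey with h | h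
      · left; linear_combination -h
      · rcases mul_eq_zero.mp h with h | h
        · right; linear_combination h
        · exact absurd h hcne
    exact ⟨hlam, halp, hrho, hbet⟩
  · rintro ⟨rfl, rfl, rfl, hbet⟩
    refine ⟨LinearEquiv.refl ℂ P2, fun i g => ?_⟩
    refine ⟨rfl, ?_, rfl, rfl⟩
    rcases hbet with rfl | rfl
    · rfl
    · simp only [LinearEquiv.refl_apply, omF, map_sub, map_neg, map_one]
      ring_nf
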